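/- Let the arrival order of the n columns be a uniformly random permutation. For any fixed i ∈ {1,…,m} and any integer 1 ≤ ℓ ≤ n: P( |Σ_{j=1}^{ℓ} b_{i,σ(j)} − (ℓ/n)·Σ_{j=1}^n b_{ij}| ≥ ℓ·b̄/2 ) ≤ 2·exp(−ℓ·b̄²/12), where σ is the random permutation, b̄ = (1/n)·min_i Σ_{j=1}^n b_{ij}, and the sum Σ_{j=1}^{ℓ} b_{i,σ(j)} is over the first ℓ arrivals. -/

import Mathlib

open Finset Real
open scoped Classical

noncomputable section

/-- Probability of the event `P` over a uniformly random permutation of `Fin n`. -/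
def permProb (n : ℕ) (P : Equiv.Perm (Fin n) → Prop) : ℝ :=
  ((Finset.univ.filter (fun σ : Equiv.Perm (Fin n) => P σ)).card : ℝ) / (Nat.factorial n : ℝ)

lemma exp_le_cosh_add {s y : ℝ} (hy1 : -1 ≤ y) (hy2 : y ≤ 1) :
    Real.exp (s * y) ≤ Real.cosh s + y * Real.sinh s := by
  have h1 : (1 + y)/2 * Real.exp s + (1 - y)/2 * Real.exp (-s)
      = Real.cosh s + y * Real.sinh s := by
    rw [Real.cosh_eq, Real.sinh_eq]; ring
  have h2 := convexOn_exp.2 (Set.mem_univ s) (Set.mem_univ (-s))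
    (by linarith : (0:ℝ) ≤ (1+y)/2) (by linarith : (0:ℝ) ≤ (1-y)/2) (by ring)
  rw [← h1]
  have h3 : ((1+y)/2) • s + ((1-y)/2) • (-s) = s * y := by
    simp only [smul_eq_mul]; ring
  rw [h3] at h2
  simpa [smul_eq_mul] using h2

lemma step_ineq (lam : ℝ) (ℓ N' : ℕ) (hl : ℓ ≤ N') (v : Fin (N'+1) → ℝ)
    (hv : ∀ j, v j ∈ Set.Icc (0:ℝ) 1) :
    ∑ p, Real.exp (lam * v p + lam * ℓ * (((∑ j, v j) - v p) / N'))
      ≤ ((N':ℝ)+1) * Real.exp (lam * (ℓ+1) * ((∑ j, v j)/((N':ℝ)+1)) + lam^2/2) := by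
  rcases Nat.eq_zero_or_pos N' with h0 | hpos
  · subst h0
    obtain rfl : ℓ = 0 := Nat.le_zero.mp hl
    rw [Fin.sum_univ_one, Fin.sum_univ_one]
    simp only [Nat.cast_zero, mul_zero, zero_mul, add_zero, zero_add]
    norm_num
    positivity
  · have hN : (0:ℝ) < N' := by exact_mod_cast hpos
    set S := ∑ j, v j with hS
    have hS0 : 0 ≤ S := Finset.sum_nonneg fun j _ => (hv j).1
    have hS1 : S ≤ (N':ℝ)+1 := by
      calc S ≤ ∑ _j : Fin (N'+1), (1:ℝ) := Finset.sum_le_sum fun j _ => (hv j).2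
        _ = (N':ℝ)+1 := by simp
    set μ := S / ((N':ℝ)+1) with hμ
    have hμ0 : 0 ≤ μ := div_nonneg hS0 (by linarith)
    have hμ1 : μ ≤ 1 := by rw [hμ, div_le_one (by linarith)]; linarith
    set s := lam * (((N':ℝ) - ℓ) / N') with hs
    have hlR : (ℓ:ℝ) ≤ N' := by exact_mod_cast hl
    have hfrac0 : 0 ≤ ((N':ℝ) - ℓ) / N' := div_nonneg (by linarith) hN.le
    have hfrac1 : ((N':ℝ) - ℓ) / N' ≤ 1 := by
      rw [div_le_one hN]; have : (0:ℝ) ≤ (ℓ:ℝ) := Nat.cast_nonneg ℓ; linarith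
    have hC : ∀ p : Fin (N'+1), lam * v p + lam * ℓ * ((S - v p) / N')
        = s * (v p - μ) + lam * (ℓ+1) * (S/((N':ℝ)+1)) := by
      intro p
      rw [hs, hμ]
      field_simp
      ring
    have hsum0 : ∑ p : Fin (N'+1), (v p - μ) = 0 := by
      rw [Finset.sum_sub_distrib, Finset.sum_const, Finset.card_univ, Fintype.card_fin, hμ, nsmul_eq_mul]
      push_cast
      field_simp
      exact sub_eq_zero.mpr hS.symm
    calc ∑ p, Real.exp (lam * v p + lam * ℓ * ((S - v p) / N'))
        = ∑ p, Real.exp (s * (v p - μ)) * Real.exp (lam * (ℓ+1) * (S/((N':ℝ)+1))) := by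
          refine Finset.sum_congr rfl fun p _ => ?_
          rw [← Real.exp_add, hC p]
      _ ≤ ∑ p, (Real.cosh s + (v p - μ) * Real.sinh s) * Real.exp (lam * (ℓ+1) * (S/((N':ℝ)+1))) := by
          refine Finset.sum_le_sum fun p _ => ?_
          refine mul_le_mul_of_nonneg_right ?_ (Real.exp_pos _).le
          exact exp_le_cosh_add (by linarith [(hv p).1]) (by linarith [(hv p).2])
      _ = (((N':ℝ)+1) * Real.cosh s) * Real.exp (lam * (ℓ+1) * (S/((N':ℝ)+1))) := by
          rw [← Finset.sum_mul]
          congr 1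
          rw [Finset.sum_add_distrib, ← Finset.sum_mul, hsum0, zero_mul, add_zero,
            Finset.sum_const, Finset.card_univ, Fintype.card_fin]
          push_cast
          ring
      _ ≤ (((N':ℝ)+1) * Real.exp (lam^2/2)) * Real.exp (lam * (ℓ+1) * (S/((N':ℝ)+1))) := by
          have h1 : Real.cosh s ≤ Real.exp (s^2/2) := Real.cosh_le_exp_half_sq s
          have hf2 : (((N':ℝ) - ℓ) / N')^2 ≤ 1 := by nlinarith
          have h2 : s^2 ≤ lam^2 := by
            rw [hs, mul_pow]
            nlinarith [sq_nonneg lam]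
          have h3 : Real.cosh s ≤ Real.exp (lam^2/2) :=
            h1.trans (Real.exp_le_exp.mpr (by linarith))
          have := mul_le_mul_of_nonneg_left h3 (by linarith : (0:ℝ) ≤ (N':ℝ)+1)
          exact mul_le_mul_of_nonneg_right this (Real.exp_pos _).le
      _ = ((N':ℝ)+1) * Real.exp (lam * (ℓ+1) * (S/((N':ℝ)+1)) + lam^2/2) := by
          rw [Real.exp_add]; ring

lemma mgf_bound (lam : ℝ) : ∀ (ℓ N : ℕ) (v : Fin N → ℝ),
    (∀ j, v j ∈ Set.Icc (0:ℝ) 1) → ℓ ≤ N →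
    ∑ σ : Equiv.Perm (Fin N), Real.exp (lam * ∑ j : Fin N, (if (j:ℕ) < ℓ then v (σ j) else 0))
      ≤ (N.factorial : ℝ) * Real.exp (lam * ℓ * ((∑ j, v j) / N) + lam^2 * ℓ / 2) := by
  intro ℓ
  induction ℓ with
  | zero =>
    intro N v hv _
    simp [Finset.sum_const, Fintype.card_perm, Fintype.card_fin]
  | succ ℓ ih =>
    intro N v hv hℓ
    obtain ⟨N', rfl⟩ : ∃ N', N = N'+1 := ⟨N-1, by omega⟩
    have hl' : ℓ ≤ N' := Nat.succ_le_succ_iff.mp hℓ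
    calc ∑ σ : Equiv.Perm (Fin (N'+1)),
          Real.exp (lam * ∑ j : Fin (N'+1), (if (j:ℕ) < ℓ+1 then v (σ j) else 0))
        = ∑ p : Fin (N'+1), ∑ e : Equiv.Perm (Fin N'),
            Real.exp (lam * v p) * Real.exp (lam * ∑ x : Fin N',
              (if (x:ℕ) < ℓ then v (Equiv.swap 0 p ((e x).succ)) else 0)) := by
          rw [← Equiv.sum_comp (Equiv.Perm.decomposeFin.symm)
            (fun σ : Equiv.Perm (Fin (N'+1)) => Real.exp (lam * ∑ j : Fin (N'+1),
              (if (j:ℕ) < ℓ+1 then v (σ j) else 0))), Fintype.sum_prod_type]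
          refine Finset.sum_congr rfl fun p _ => Finset.sum_congr rfl fun e _ => ?_
          rw [← Real.exp_add]
          congr 1
          rw [Fin.sum_univ_succ]
          simp only [Equiv.Perm.decomposeFin_symm_apply_zero,
            Equiv.Perm.decomposeFin_symm_apply_succ, Fin.val_zero, Fin.val_succ,
            Nat.succ_lt_succ_iff, Nat.zero_lt_succ, if_true]
          ring
      _ ≤ ∑ p : Fin (N'+1), Real.exp (lam * v p) *
            ((N'.factorial : ℝ) * Real.exp (lam * ℓ * (((∑ j, v j) - v p) / N') + lam^2 * ℓ / 2)) := by
          refine Finset.sum_le_sum fun p _ => ?_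
          rw [← Finset.mul_sum]
          refine mul_le_mul_of_nonneg_left ?_ (Real.exp_pos _).le
          have hsum : ∑ x : Fin N', v (Equiv.swap 0 p x.succ) = (∑ j, v j) - v p := by
            have h1 : ∑ j : Fin (N'+1), v (Equiv.swap 0 p j) = ∑ j, v j :=
              Equiv.sum_comp (Equiv.swap 0 p) v
            have h2 := Fin.sum_univ_succ (fun j : Fin (N'+1) => v (Equiv.swap 0 p j))
            rw [h1, Equiv.swap_apply_left] at h2
            linarith
          have ihp := ih N' (fun x => v (Equiv.swap 0 p x.succ))
            (fun x => hv _) hl'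
          rw [hsum] at ihp
          exact ihp
      _ = ((N'.factorial : ℝ) * Real.exp (lam^2 * ℓ / 2)) *
            ∑ p, Real.exp (lam * v p + lam * ℓ * (((∑ j, v j) - v p) / N')) := by
          rw [Finset.mul_sum]
          refine Finset.sum_congr rfl fun p _ => ?_
          rw [Real.exp_add, Real.exp_add]
          ring
      _ ≤ ((N'.factorial : ℝ) * Real.exp (lam^2 * ℓ / 2)) *
            (((N':ℝ)+1) * Real.exp (lam * (ℓ+1) * ((∑ j, v j)/((N':ℝ)+1)) + lam^2/2)) := by
          refine mul_le_mul_of_nonneg_left (step_ineq lam ℓ N' hl' v hv) ?_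
          positivity
      _ = ((N'+1).factorial : ℝ) * (Real.exp (lam^2 * ℓ / 2) *
            Real.exp (lam * (ℓ+1) * ((∑ j, v j)/((N':ℝ)+1)) + lam^2/2)) := by
          rw [Nat.factorial_succ]
          push_cast
          ring
      _ = ((N'+1).factorial : ℝ) *
            Real.exp (lam * ((ℓ+1 : ℕ):ℝ) * ((∑ j, v j) / (((N'+1 : ℕ)):ℝ)) + lam^2 * ((ℓ+1 : ℕ):ℝ) / 2) := by
          rw [← Real.exp_add]
          push_cast
          congr 1
          ring

lemma chernoff_count {N : ℕ} (g : Equiv.Perm (Fin N) → ℝ) (t lam : ℝ) (hlam : 0 ≤ lam) :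
    ((Finset.univ.filter (fun σ : Equiv.Perm (Fin N) => t ≤ g σ)).card : ℝ) * Real.exp (lam * t)
      ≤ ∑ σ : Equiv.Perm (Fin N), Real.exp (lam * g σ) := by
  calc ((Finset.univ.filter (fun σ : Equiv.Perm (Fin N) => t ≤ g σ)).card : ℝ) * Real.exp (lam * t)
      = ∑ _σ ∈ Finset.univ.filter (fun σ : Equiv.Perm (Fin N) => t ≤ g σ), Real.exp (lam * t) := by
        rw [Finset.sum_const, nsmul_eq_mul]
    _ ≤ ∑ σ ∈ Finset.univ.filter (fun σ : Equiv.Perm (Fin N) => t ≤ g σ), Real.exp (lam * g σ) := by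
        refine Finset.sum_le_sum fun σ hσ => ?_
        exact Real.exp_le_exp.mpr (mul_le_mul_of_nonneg_left (Finset.mem_filter.mp hσ).2 hlam)
    _ ≤ ∑ σ : Equiv.Perm (Fin N), Real.exp (lam * g σ) :=
        Finset.sum_le_sum_of_subset_of_nonneg (Finset.filter_subset _ _)
          (fun σ _ _ => (Real.exp_pos _).le)

/-- For any fixed `i` and `1 ≤ ℓ ≤ n`,
`P(|∑_{j=1}^ℓ b_{i,σ(j)} − (ℓ/n) ∑_{j=1}^n b_{ij}| ≥ ℓ b̄/2) ≤ 2 exp(−ℓ b̄²/12)`. -/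
theorem row_sum_concentration {m n : ℕ} (hm : 0 < m) (hn : 0 < n)
    (b : Fin m → Fin n → ℝ) (hb : ∀ i j, b i j ∈ Set.Icc (0 : ℝ) 1)
    (bbar : ℝ) (hbbar : bbar = (1 / (n : ℝ)) * ⨅ i, ∑ j, b i j)
    (i : Fin m) (ℓ : ℕ) (hℓ1 : 1 ≤ ℓ) (hℓ2 : ℓ ≤ n) :
    permProb n (fun σ =>
      (ℓ : ℝ) * bbar / 2 ≤
        |(∑ j : Fin n, if (j : ℕ) < ℓ then b i (σ j) else 0) -
          (ℓ : ℝ) / (n : ℝ) * ∑ j, b i j|) ≤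
    2 * Real.exp (-(ℓ : ℝ) * bbar ^ 2 / 12) := by
  haveI : Nonempty (Fin m) := Fin.pos_iff_nonempty.mp hm
  have hnR : (0:ℝ) < n := by exact_mod_cast hn
  have hbbar0 : 0 ≤ bbar := by
    rw [hbbar]
    refine mul_nonneg (by positivity) ?_
    exact le_ciInf fun i' => Finset.sum_nonneg fun j _ => (hb i' j).1
  set S := ∑ j, b i j with hSdef
  set X : Equiv.Perm (Fin n) → ℝ :=
    fun σ => ∑ j : Fin n, if (j : ℕ) < ℓ then b i (σ j) else 0 with hXdef
  set a := (ℓ:ℝ)/(n:ℝ) * S with hadef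
  set t := (ℓ:ℝ) * bbar / 2 with htdef
  set lam := bbar/2 with hlamdef
  have hlam0 : 0 ≤ lam := by positivity
  have hfacpos : (0:ℝ) < (n.factorial : ℝ) := by
    exact_mod_cast n.factorial_pos
  -- upper tail
  have hup : ((Finset.univ.filter (fun σ : Equiv.Perm (Fin n) => t ≤ X σ - a)).card : ℝ)
      ≤ (n.factorial : ℝ) * Real.exp (lam^2 * ℓ / 2 - lam * t) := by
    have hcc := chernoff_count (fun σ => X σ - a) t lam hlam0
    have heq : ∑ σ : Equiv.Perm (Fin n), Real.exp (lam * (X σ - a))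
        = Real.exp (-(lam*a)) * ∑ σ : Equiv.Perm (Fin n), Real.exp (lam * X σ) := by
      rw [Finset.mul_sum]
      refine Finset.sum_congr rfl fun σ _ => ?_
      rw [← Real.exp_add]; congr 1; ring
    rw [heq] at hcc
    have hmgf := mgf_bound lam ℓ n (fun j => b i j) (fun j => hb i j) hℓ2
    have hle : Real.exp (-(lam*a)) * ∑ σ : Equiv.Perm (Fin n), Real.exp (lam * X σ)
        ≤ (n.factorial : ℝ) * Real.exp (lam^2 * ℓ / 2) := by
      calc Real.exp (-(lam*a)) * ∑ σ : Equiv.Perm (Fin n), Real.exp (lam * X σ)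
          ≤ Real.exp (-(lam*a)) * ((n.factorial : ℝ) * Real.exp (lam * ℓ * (S / n) + lam^2 * ℓ / 2)) :=
            mul_le_mul_of_nonneg_left hmgf (Real.exp_pos _).le
        _ = (n.factorial : ℝ) * (Real.exp (-(lam*a)) * Real.exp (lam*a) * Real.exp (lam^2*ℓ/2)) := by
            rw [show lam * ℓ * (S / n) = lam * a by rw [hadef]; ring, Real.exp_add]; ring
        _ = (n.factorial : ℝ) * Real.exp (lam^2*ℓ/2) := by
            rw [← Real.exp_add]; simp
    have hcc2 := hcc.trans hle
    rw [← le_div_iff₀ (Real.exp_pos _)] at hcc2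
    calc ((Finset.univ.filter (fun σ : Equiv.Perm (Fin n) => t ≤ X σ - a)).card : ℝ)
        ≤ (n.factorial : ℝ) * Real.exp (lam^2 * ℓ / 2) / Real.exp (lam * t) := hcc2
      _ = (n.factorial : ℝ) * Real.exp (lam^2 * ℓ / 2 - lam * t) := by
          rw [Real.exp_sub]; ring
  -- lower tail
  have hlow : ((Finset.univ.filter (fun σ : Equiv.Perm (Fin n) => t ≤ a - X σ)).card : ℝ)
      ≤ (n.factorial : ℝ) * Real.exp (lam^2 * ℓ / 2 - lam * t) := by
    have hcc := chernoff_count (fun σ => a - X σ) t lam hlam0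
    have heq : ∑ σ : Equiv.Perm (Fin n), Real.exp (lam * (a - X σ))
        = Real.exp (lam*a) * ∑ σ : Equiv.Perm (Fin n), Real.exp ((-lam) * X σ) := by
      rw [Finset.mul_sum]
      refine Finset.sum_congr rfl fun σ _ => ?_
      rw [← Real.exp_add]; congr 1; ring
    rw [heq] at hcc
    have hmgf := mgf_bound (-lam) ℓ n (fun j => b i j) (fun j => hb i j) hℓ2
    have hle : Real.exp (lam*a) * ∑ σ : Equiv.Perm (Fin n), Real.exp ((-lam) * X σ)
        ≤ (n.factorial : ℝ) * Real.exp (lam^2 * ℓ / 2) := by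
      calc Real.exp (lam*a) * ∑ σ : Equiv.Perm (Fin n), Real.exp ((-lam) * X σ)
          ≤ Real.exp (lam*a) * ((n.factorial : ℝ) * Real.exp ((-lam) * ℓ * (S / n) + (-lam)^2 * ℓ / 2)) :=
            mul_le_mul_of_nonneg_left hmgf (Real.exp_pos _).le
        _ = (n.factorial : ℝ) * (Real.exp (lam*a) * Real.exp (-(lam*a)) * Real.exp (lam^2*ℓ/2)) := by
            rw [show (-lam) * ℓ * (S / n) + (-lam)^2 * ℓ / 2 = -(lam*a) + lam^2*ℓ/2 by
              rw [hadef]; ring, Real.exp_add]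
            ring
        _ = (n.factorial : ℝ) * Real.exp (lam^2*ℓ/2) := by
            rw [← Real.exp_add]; simp
    have hcc2 := hcc.trans hle
    rw [← le_div_iff₀ (Real.exp_pos _)] at hcc2
    calc ((Finset.univ.filter (fun σ : Equiv.Perm (Fin n) => t ≤ a - X σ)).card : ℝ)
        ≤ (n.factorial : ℝ) * Real.exp (lam^2 * ℓ / 2) / Real.exp (lam * t) := hcc2
      _ = (n.factorial : ℝ) * Real.exp (lam^2 * ℓ / 2 - lam * t) := by
          rw [Real.exp_sub]; ring
  -- union bound
  have hsplit : (Finset.univ.filter (fun σ : Equiv.Perm (Fin n) => t ≤ |X σ - a|))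
      ⊆ (Finset.univ.filter (fun σ : Equiv.Perm (Fin n) => t ≤ X σ - a))
        ∪ (Finset.univ.filter (fun σ : Equiv.Perm (Fin n) => t ≤ a - X σ)) := by
    intro σ hσ
    rw [Finset.mem_filter] at hσ
    rcases le_abs.mp hσ.2 with h | h
    · exact Finset.mem_union_left _ (Finset.mem_filter.mpr ⟨Finset.mem_univ _, h⟩)
    · exact Finset.mem_union_right _ (Finset.mem_filter.mpr ⟨Finset.mem_univ _, by linarith⟩)
  have hcard : ((Finset.univ.filter (fun σ : Equiv.Perm (Fin n) => t ≤ |X σ - a|)).card : ℝ)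
      ≤ 2 * ((n.factorial : ℝ) * Real.exp (lam^2 * ℓ / 2 - lam * t)) := by
    have h1 := Finset.card_le_card hsplit
    have h2 := Finset.card_union_le
      (Finset.univ.filter (fun σ : Equiv.Perm (Fin n) => t ≤ X σ - a))
      (Finset.univ.filter (fun σ : Equiv.Perm (Fin n) => t ≤ a - X σ))
    have h3 : ((Finset.univ.filter (fun σ : Equiv.Perm (Fin n) => t ≤ |X σ - a|)).card : ℝ)
        ≤ ((Finset.univ.filter (fun σ : Equiv.Perm (Fin n) => t ≤ X σ - a)).card : ℝ)
          + ((Finset.univ.filter (fun σ : Equiv.Perm (Fin n) => t ≤ a - X σ)).card : ℝ) := by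
      exact_mod_cast h1.trans h2
    linarith
  -- conclusion
  have hexp : lam^2 * ℓ / 2 - lam * t ≤ -(ℓ:ℝ) * bbar^2 / 12 := by
    have hq : 0 ≤ (ℓ:ℝ) * bbar^2 := by positivity
    rw [hlamdef, htdef]
    nlinarith
  have hfinal : ((Finset.univ.filter (fun σ : Equiv.Perm (Fin n) => t ≤ |X σ - a|)).card : ℝ)
      / (n.factorial : ℝ) ≤ 2 * Real.exp (-(ℓ:ℝ) * bbar^2 / 12) := by
    rw [div_le_iff₀ hfacpos]
    calc ((Finset.univ.filter (fun σ : Equiv.Perm (Fin n) => t ≤ |X σ - a|)).card : ℝ)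
        ≤ 2 * ((n.factorial : ℝ) * Real.exp (lam^2 * ℓ / 2 - lam * t)) := hcard
      _ ≤ 2 * ((n.factorial : ℝ) * Real.exp (-(ℓ:ℝ) * bbar^2 / 12)) := by
          have := Real.exp_le_exp.mpr hexp
          nlinarith [Real.exp_pos (lam^2 * ℓ / 2 - lam * t)]
      _ = 2 * Real.exp (-(ℓ:ℝ) * bbar^2 / 12) * (n.factorial : ℝ) := by ring
  exact hfinal

end
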